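/- If H is a Left end and G is not a Left end, then G ≥ H fails under misère play: there exists a game X with o⁻(G + X) < o⁻(H + X) or the outcomes incomparable (i.e., it is not the case that o⁻(G+X) ≥ o⁻(H+X) for all X). -/

import Mathlib

universe u

namespace SetTheory

/-- Pre-game, as in Mathlib of December 2024 (`Mathlib/SetTheory/Game/PGame.lean`), since removed. -/
inductive PGame : Type (u + 1)
  | mk : ∀ α β : Type u, (α → PGame) → (β → PGame) → PGame

namespace PGame

/-- The indexing type for allowable moves by Left. -/
def LeftMoves : PGame → Type u
  | mk l _ _ _ => l

/-- The indexing type for allowable moves by Right. -/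
def RightMoves : PGame → Type u
  | mk _ r _ _ => r

/-- The new game after Left makes an allowed move. -/
def moveLeft : ∀ g : PGame, LeftMoves g → PGame
  | mk _l _ L _ => L

/-- The new game after Right makes an allowed move. -/
def moveRight : ∀ g : PGame, RightMoves g → PGame
  | mk _ _r _ R => R

/-- `IsOption x y` means that `x` is either a left or right option for `y`. -/
inductive IsOption : PGame → PGame → Prop
  | moveLeft {x : PGame} (i : x.LeftMoves) : IsOption (x.moveLeft i) x
  | moveRight {x : PGame} (i : x.RightMoves) : IsOption (x.moveRight i) x

/-- `Subsequent x y` says that `x` can be obtained by playing some nonempty sequence of moves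
from `y`. -/
def Subsequent : PGame → PGame → Prop :=
  Relation.TransGen IsOption

/-- The sum of `x = {xL | xR}` and `y = {yL | yR}` is `{xL + y, x + yL | xR + y, x + yR}`. -/
noncomputable instance : Add PGame.{u} :=
  ⟨fun x y => by
    induction x generalizing y with | mk xl xr _ _ IHxl IHxr => _
    induction y with | mk yl yr yL yR IHyl IHyr => _
    have y := mk yl yr yL yR
    refine ⟨xl ⊕ yl, xr ⊕ yr, Sum.rec ?_ ?_, Sum.rec ?_ ?_⟩
    · exact fun i => IHxl i y
    · exact IHyl
    · exact fun i => IHxr i y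
    · exact IHyr⟩

end PGame

end SetTheory

open SetTheory

namespace Misere

/-- Misère winning: `(wins G).1` means Left, moving first on `G`, wins under misère play;
`(wins G).2` means Right, moving first, wins. The player unable to move wins. -/
def wins : PGame → Prop × Prop
  | ⟨α, β, L, R⟩ =>
    (IsEmpty α ∨ ∃ i, ¬ (wins (L i)).2,
     IsEmpty β ∨ ∃ j, ¬ (wins (R j)).1)

/-- Left wins moving first under misère play. -/
def LeftFirst (G : PGame) : Prop := (wins G).1

/-- Right wins moving first under misère play. -/
def RightFirst (G : PGame) : Prop := (wins G).2

/-- Normal-play winning: `(nwins G).1` means Left moving first wins (player unable to move loses). -/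
def nwins : PGame → Prop × Prop
  | ⟨α, β, L, R⟩ =>
    (∃ i, ¬ (nwins (L i)).2,
     ∃ j, ¬ (nwins (R j)).1)

/-- Outcome classes. -/
inductive Outcome : Type
  | L | R | N | P
  deriving DecidableEq

/-- The partial order on outcomes: L > P > R, L > N > R, with P and N incomparable. -/
instance : LE Outcome := ⟨fun a b => a = b ∨ a = .R ∨ b = .L⟩

open Classical in
/-- The misère outcome of a game. -/
noncomputable def misereOutcome (G : PGame) : Outcome :=
  if (wins G).1 then (if (wins G).2 then .N else .L)
  else (if (wins G).2 then .R else .P)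

open Classical in
/-- The normal-play outcome of a game. -/
noncomputable def normalOutcome (G : PGame) : Outcome :=
  if (nwins G).1 then (if (nwins G).2 then .N else .L)
  else (if (nwins G).2 then .R else .P)

/-- A game is dicot if every subposition has a Left option iff it has a Right option. -/
def Dicot : PGame → Prop
  | ⟨α, β, L, R⟩ => (IsEmpty α ↔ IsEmpty β) ∧ (∀ i, Dicot (L i)) ∧ (∀ j, Dicot (R j))

/-- A dead Left end: a Left end all of whose followers are Left ends. -/
def DeadLeftEnd : PGame → Prop
  | ⟨α, _β, _L, R⟩ => IsEmpty α ∧ ∀ j, DeadLeftEnd (R j)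

/-- A dead Right end: a Right end all of whose followers are Right ends. -/
def DeadRightEnd : PGame → Prop
  | ⟨_α, β, L, _R⟩ => IsEmpty β ∧ ∀ i, DeadRightEnd (L i)

/-- A follower of `G` is any position reachable from `G`, including `G` itself. -/
def Follower (H G : PGame) : Prop := H = G ∨ PGame.Subsequent H G

/-- An end: a position where some player has no move. -/
def IsEnd (G : PGame) : Prop := IsEmpty G.LeftMoves ∨ IsEmpty G.RightMoves

/-- A game is dead-ending if every one of its end followers is a dead end. -/
def DeadEnding (G : PGame) : Prop :=
  ∀ H, Follower H G → IsEnd H → (DeadLeftEnd H ∨ DeadRightEnd H)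

end Misere

namespace SetTheory

namespace PGame

instance : Zero PGame.{u} := ⟨mk PEmpty PEmpty PEmpty.elim PEmpty.elim⟩

def toLeftMovesAdd : {x y : PGame.{u}} → x.LeftMoves ⊕ y.LeftMoves → (x + y).LeftMoves
  | mk _ _ _ _, mk _ _ _ _ => fun s => s

def toRightMovesAdd : {x y : PGame.{u}} → x.RightMoves ⊕ y.RightMoves → (x + y).RightMoves
  | mk _ _ _ _, mk _ _ _ _ => fun s => s

theorem leftMoves_add_cases {x y : PGame.{u}} (k) {P : (x + y).LeftMoves → Prop}
    (hl : ∀ i, P (toLeftMovesAdd (Sum.inl i))) (hr : ∀ i, P (toLeftMovesAdd (Sum.inr i))) :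
    P k := by
  cases x
  cases y
  have h : ∀ s : _ ⊕ _, P (toLeftMovesAdd s) := by
    rintro (i | i)
    · exact hl i
    · exact hr i
  exact h k

theorem add_moveLeft_inl {x y : PGame.{u}} (i : x.LeftMoves) :
    (x + y).moveLeft (toLeftMovesAdd (Sum.inl i)) = x.moveLeft i + y := by
  cases x
  cases y
  rfl

theorem add_moveLeft_inr {x y : PGame.{u}} (i : y.LeftMoves) :
    (x + y).moveLeft (toLeftMovesAdd (Sum.inr i)) = x + y.moveLeft i := by
  cases x
  cases y
  rfl

theorem add_moveRight_inl {x y : PGame.{u}} (i : x.RightMoves) :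
    (x + y).moveRight (toRightMovesAdd (Sum.inl i)) = x.moveRight i + y := by
  cases x
  cases y
  rfl

theorem add_moveRight_inr {x y : PGame.{u}} (i : y.RightMoves) :
    (x + y).moveRight (toRightMovesAdd (Sum.inr i)) = x + y.moveRight i := by
  cases x
  cases y
  rfl

theorem isEmpty_leftMoves_add (x y : PGame.{u}) [hx : IsEmpty x.LeftMoves]
    [hy : IsEmpty y.LeftMoves] : IsEmpty (x + y).LeftMoves := by
  cases x
  cases y
  refine ⟨fun k => ?_⟩
  rcases k with k | k
  · exact hx.false k
  · exact hy.false k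

theorem isEmpty_rightMoves_add (x y : PGame.{u}) [hx : IsEmpty x.RightMoves]
    [hy : IsEmpty y.RightMoves] : IsEmpty (x + y).RightMoves := by
  cases x
  cases y
  refine ⟨fun k => ?_⟩
  rcases k with k | k
  · exact hx.false k
  · exact hy.false k

end PGame

end SetTheory

namespace Misere

theorem leftFirst_iff (A : PGame) :
    LeftFirst A ↔ IsEmpty A.LeftMoves ∨ ∃ i, ¬ RightFirst (A.moveLeft i) := by
  cases A with
  | mk α β L R =>
    simp only [LeftFirst, RightFirst, wins]
    exact Iff.rfl

theorem rightFirst_iff (A : PGame) :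
    RightFirst A ↔ IsEmpty A.RightMoves ∨ ∃ j, ¬ LeftFirst (A.moveRight j) := by
  cases A with
  | mk α β L R =>
    simp only [LeftFirst, RightFirst, wins]
    exact Iff.rfl

/-- A variant of the misère adjoint: `adj K` has as Left options the adjoints of the Right
options of `K` (plus `0` if `K` has no options at all), and as Right options the adjoints
of the Left options of `K`. -/
def adj : PGame → PGame
  | ⟨α, β, L, R⟩ =>
    ⟨β ⊕ PLift (IsEmpty α ∧ IsEmpty β), α,
     fun i => match i with
       | .inl j => adj (R j)
       | .inr _ => 0,
     fun i => adj (L i)⟩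

/-- The key adjoint property: Left, moving first, loses `K + adj K` under misère play. -/
theorem adj_main : ∀ K : PGame, ¬ LeftFirst (K + adj K) := by
  intro K
  induction K with
  | mk α β L R ihL ihR =>
    rw [adj, leftFirst_iff]
    rintro (h | ⟨i, hi⟩)
    · -- `K + adj K` always has a Left move
      by_cases hα : Nonempty α
      · exact h.elim (PGame.toLeftMovesAdd (Sum.inl hα.some))
      · by_cases hβ : Nonempty β
        · exact h.elim (PGame.toLeftMovesAdd (Sum.inr (Sum.inl hβ.some)))
        · exact h.elim (PGame.toLeftMovesAdd (Sum.inr (Sum.inr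
            ⟨⟨not_nonempty_iff.mp hα, not_nonempty_iff.mp hβ⟩⟩)))
    · apply hi
      clear hi
      apply PGame.leftMoves_add_cases i
      · intro a
        rw [PGame.add_moveLeft_inl, rightFirst_iff]
        refine Or.inr ⟨PGame.toRightMovesAdd (Sum.inr a), ?_⟩
        erw [PGame.add_moveRight_inr]
        exact ihL a
      · rintro (b | ⟨⟨hα, hβ⟩⟩)
        · erw [PGame.add_moveLeft_inr, rightFirst_iff]
          refine Or.inr ⟨PGame.toRightMovesAdd (Sum.inl b), ?_⟩
          erw [PGame.add_moveRight_inl]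
          exact ihR b
        · erw [PGame.add_moveLeft_inr, rightFirst_iff]
          left
          exact @PGame.isEmpty_rightMoves_add ⟨α, β, L, R⟩ _ hβ (inferInstanceAs (IsEmpty PEmpty))

theorem outcome_le_def (a b : Outcome) : a ≤ b ↔ (a = b ∨ a = .R ∨ b = .L) := Iff.rfl

end Misere

open Misere in
/-- Siegel, Lemma 3.5: if `H` is a Left end and `G` is not, then `G ≥ H`
fails under misère play. -/
theorem not_ge_left_end (G H : PGame)
    (hH : IsEmpty H.LeftMoves) (hG : Nonempty G.LeftMoves) :
    ¬ ∀ X : PGame, misereOutcome (H + X) ≤ misereOutcome (G + X) := by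
  intro hall
  set X : PGame := PGame.mk PEmpty G.LeftMoves PEmpty.elim (fun i => adj (G.moveLeft i)) with hX
  have hHX : LeftFirst (H + X) := by
    rw [leftFirst_iff]
    left
    exact @PGame.isEmpty_leftMoves_add H X hH (inferInstanceAs (IsEmpty PEmpty))
  have hGX : ¬ LeftFirst (G + X) := by
    rw [leftFirst_iff]
    rintro (h | ⟨i, hi⟩)
    · exact h.elim (PGame.toLeftMovesAdd (Sum.inl hG.some))
    · apply hi
      clear hi
      apply PGame.leftMoves_add_cases i
      · intro a
        rw [PGame.add_moveLeft_inl, rightFirst_iff]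
        refine Or.inr ⟨PGame.toRightMovesAdd (Sum.inr a), ?_⟩
        erw [PGame.add_moveRight_inr]
        exact adj_main (G.moveLeft a)
      · rintro ⟨⟩
  have hle := hall X
  rw [outcome_le_def] at hle
  unfold misereOutcome at hle
  have h1 : (wins (H + X)).1 := hHX
  have h1' : ¬ (wins (G + X)).1 := hGX
  by_cases h2 : (wins (H + X)).2 <;> by_cases h3 : (wins (G + X)).2 <;>
    simp [h1, h1', h2, h3] at hle
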